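/- arXiv:1508.03890 — 4 statements merged into one kernel-verified Lean document; each statement's English description precedes it below -/
import Mathlib

section
/- Let b_n ∈ [0,1) satisfy n·b_n = ln n + β_n with |β_n| = o(ln n) and β_n → −∞. Then for any fixed constant a ∈ (0,1], the quantity a·n·(1−b_n)^{n−1} tends to infinity as n → ∞. -/
open Filter

/-- If `b n = (ln n + β n)/n ∈ [0,1)` with `|β n| = o(ln n)` and `β n → -∞`,
then for any constant `a ∈ (0,1]`, `a·n·(1 - b n)^{n-1} → ∞`. -/
theorem stmt_6 (β b : ℕ → ℝ) (hb : ∀ n, b n = (Real.log n + β n) / n)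
    (hrange : ∀ n, b n ∈ Set.Ico (0 : ℝ) 1)
    (hβ : Tendsto (fun (n : ℕ) => β n / Real.log n) atTop (nhds 0))
    (hbot : Tendsto β atTop atBot)
    (a : ℝ) (ha0 : 0 < a) (ha1 : a ≤ 1) :
    Tendsto (fun (n : ℕ) => a * (n : ℝ) * (1 - b n) ^ (n - 1)) atTop atTop := by
  have hb0 : ∀ n, 0 ≤ b n := fun n => (hrange n).1
  have hb1 : ∀ n, b n < 1 := fun n => (hrange n).2
  have h1b : ∀ n, (0:ℝ) < 1 - b n := fun n => by linarith [hb1 n]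
  -- (log n)^2 / n → 0
  have hsq : Tendsto (fun n : ℕ => Real.log n * Real.log n / n) atTop (nhds 0) := by
    have h := (Real.tendsto_pow_log_div_mul_add_atTop 1 0 2 one_ne_zero).comp
      tendsto_natCast_atTop_atTop
    simpa [Function.comp_def, sq, pow_two] using h
  -- b n * log n → 0
  have hbln : Tendsto (fun n : ℕ => b n * Real.log n) atTop (nhds 0) := by
    have h : Tendsto (fun n : ℕ => (1 + β n / Real.log n) * (Real.log n * Real.log n / n))
        atTop (nhds 0) := by
      have := ((tendsto_const_nhds (x := (1:ℝ))).add hβ).mul hsq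
      simpa using this
    refine h.congr' ?_
    filter_upwards [eventually_ge_atTop 2] with n hn
    have hn0 : (0:ℝ) < n := by positivity
    have hL : Real.log n ≠ 0 := by
      have : (1:ℝ) < n := by exact_mod_cast Nat.lt_of_lt_of_le one_lt_two hn
      exact ne_of_gt (Real.log_pos this)
    rw [hb n]
    field_simp
  -- g n := -β n - b n * log n → atTop
  have hg : Tendsto (fun n : ℕ => -β n - b n * Real.log n) atTop atTop := by
    have h1 : Tendsto (fun n : ℕ => -β n) atTop atTop :=
      tendsto_neg_atBot_atTop.comp hbot
    exact h1.atTop_add (by simpa using hbln.neg)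
  -- exponent
  set E : ℕ → ℝ := fun n => Real.log n + ((n - 1 : ℕ) : ℝ) * Real.log (1 - b n) with hE
  have hEtop : Tendsto E atTop atTop := by
    refine tendsto_atTop_mono' atTop ?_ hg
    filter_upwards [eventually_ge_atTop 1, hg.eventually_ge_atTop 0] with n hn hgn
    have hn0 : (0:ℝ) < n := by exact_mod_cast Nat.lt_of_lt_of_le Nat.zero_lt_one hn
    set x := b n with hx
    set L := Real.log n with hL
    have hnx : (n:ℝ) * x = L + β n := by
      rw [hx, hb n]; field_simp; rfl
    have h1x : (0:ℝ) < 1 - x := h1b n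
    -- log (1-x) ≥ -x/(1-x)
    have hlog1 : -(x / (1 - x)) ≤ Real.log (1 - x) := by
      have h := Real.log_le_sub_one_of_pos (x := (1 - x)⁻¹) (by positivity)
      rw [Real.log_inv] at h
      have : (1 - x)⁻¹ - 1 = x / (1 - x) := by field_simp; ring
      linarith [this ▸ h]
    have hlogle : Real.log (1 - x) ≤ 0 := Real.log_nonpos (by linarith [hb0 n]) (by linarith [hb0 n])
    -- (n-1) * log(1-x) ≥ n * log(1-x)
    have hcast : ((n - 1 : ℕ) : ℝ) = (n:ℝ) - 1 := by
      rw [Nat.cast_sub hn]; norm_num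
    have h2 : (n:ℝ) * Real.log (1 - x) ≤ ((n - 1 : ℕ) : ℝ) * Real.log (1 - x) := by
      rw [hcast]
      have : (n:ℝ) - 1 ≤ (n:ℝ) := by linarith
      exact mul_le_mul_of_nonpos_right this hlogle
    have h3 : (n:ℝ) * -(x / (1 - x)) ≤ (n:ℝ) * Real.log (1 - x) :=
      mul_le_mul_of_nonneg_left hlog1 (le_of_lt hn0)
    have h4 : (n:ℝ) * -(x / (1 - x)) = -((L + β n) / (1 - x)) := by
      rw [← hnx]; field_simp
    have h5 : L - (L + β n) / (1 - x) = (-(x * L) - β n) / (1 - x) := by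
      field_simp; ring
    have h6 : -(x * L) - β n ≤ (-(x * L) - β n) / (1 - x) := by
      rw [le_div_iff₀ h1x]
      have h7 : (0:ℝ) ≤ -(x * L) - β n := by
        have : -β n - x * L = -(x*L) - β n := by ring
        linarith [this ▸ hgn]
      nlinarith [hb0 n]
    have : -β n - x * L ≤ E n := by
      have hEn : E n = L + ((n - 1 : ℕ) : ℝ) * Real.log (1 - x) := rfl
      rw [hEn]
      calc -β n - x * L = -(x * L) - β n := by ring
        _ ≤ (-(x * L) - β n) / (1 - x) := h6
        _ = L - (L + β n) / (1 - x) := h5.symm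
        _ = L + -((L + β n) / (1 - x)) := by ring
        _ ≤ L + (n:ℝ) * Real.log (1 - x) := by
            rw [← h4]; linarith [h3]
        _ ≤ L + ((n - 1 : ℕ) : ℝ) * Real.log (1 - x) := by linarith [h2]
    simpa using this
  -- conclude
  have hexp : Tendsto (fun n : ℕ => a * Real.exp (E n)) atTop atTop :=
    (Real.tendsto_exp_atTop.comp hEtop).const_mul_atTop ha0
  refine hexp.congr' ?_
  filter_upwards [eventually_ge_atTop 1] with n hn
  have hn0 : (0:ℝ) < n := by exact_mod_cast Nat.lt_of_lt_of_le Nat.zero_lt_one hn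
  have : Real.exp (E n) = (n:ℝ) * (1 - b n) ^ (n - 1) := by
    rw [hE]
    simp only
    rw [Real.exp_add, Real.exp_log hn0, Real.exp_nat_mul, Real.exp_log (h1b n)]
  rw [this]; ring
end

section
/- In the general random intersection graph G(n, a⃗, K⃗, P), the unconditional probability that a fixed vertex v₁ is isolated equals Σ_{i=1}^m a_i (1 − b_i)^{n−1}, where b_i = Σ_{j=1}^m a_j (1 − C(P−K_i, K_j)/C(P, K_j)); in particular, if K_1 ≤ K_2 ≤ … ≤ K_m (so that b_1 ≤ b_i for all i), then this probability is at most (1 − b_1)^{n−1}. -/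
open Finset

attribute [local instance] Classical.propDecidable

/-- Probability weight of a configuration of the general random intersection graph
`G(n, a⃗, K⃗, P)`. -/
noncomputable def cfgWeight (n m P : ℕ) (a : Fin m → ℝ) (K : Fin m → ℕ)
    (ω : Fin n → Fin m × Finset (Fin P)) : ℝ :=
  ∏ v : Fin n,
    (a (ω v).1 * if (ω v).2.card = K (ω v).1 then (1 : ℝ) / (P.choose (K (ω v).1) : ℝ) else 0)

lemma count_disjoint {P : ℕ} (S : Finset (Fin P)) (r : ℕ) (c : ℝ) :
    ∑ T : Finset (Fin P), (if Disjoint S T ∧ T.card = r then c else 0)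
      = ((P - S.card).choose r : ℝ) * c := by
  classical
  rw [← Finset.sum_filter]
  have h : (Finset.univ.filter fun T : Finset (Fin P) => Disjoint S T ∧ T.card = r)
      = Finset.powersetCard r Sᶜ := by
    ext T
    simp only [Finset.mem_filter, Finset.mem_univ, true_and, Finset.mem_powersetCard]
    constructor
    · rintro ⟨h1, h2⟩; exact ⟨le_compl_iff_disjoint_left.mpr h1, h2⟩
    · rintro ⟨h1, h2⟩; exact ⟨le_compl_iff_disjoint_left.mp h1, h2⟩
  rw [h, Finset.sum_const, Finset.card_powersetCard, Finset.card_compl]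
  simp [Fintype.card_fin, nsmul_eq_mul]

lemma ris_inner_sum {m P : ℕ} (a : Fin m → ℝ) (K : Fin m → ℕ) (S : Finset (Fin P)) :
    (∑ y : Fin m × Finset (Fin P),
        if Disjoint S y.2 then
          a y.1 * (if y.2.card = K y.1 then (1:ℝ)/(P.choose (K y.1) : ℝ) else 0) else 0)
      = ∑ k, a k * (((P - S.card).choose (K k) : ℝ) / (P.choose (K k) : ℝ)) := by
  classical
  rw [Fintype.sum_prod_type]
  refine Finset.sum_congr rfl fun k _ => ?_
  have h : ∀ T : Finset (Fin P),
      (if Disjoint S T then a k * (if T.card = K k then (1:ℝ)/(P.choose (K k) : ℝ) else 0) else 0)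
        = (if Disjoint S T ∧ T.card = K k then a k * ((1:ℝ)/(P.choose (K k) : ℝ)) else 0) := by
    intro T
    by_cases h1 : Disjoint S T <;> by_cases h2 : T.card = K k <;> simp [h1, h2]
  rw [Finset.sum_congr rfl fun T _ => h T, count_disjoint]
  ring

/-- The probability that a fixed vertex `v₁` is isolated in `G(n, a⃗, K⃗, P)` equals
`∑_i a_i (1 - b_i)^{n-1}` where `b_i = ∑_j a_j (1 - C(P-K_i, K_j)/C(P, K_j))`; and if
`K_1 ≤ K_2 ≤ … ≤ K_m`, this probability is at most `(1 - b_1)^{n-1}`. -/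
theorem stmt_12 (n m P : ℕ) (hn : 0 < n) (hm : 0 < m) (a : Fin m → ℝ)
    (ha : ∀ j, 0 < a j) (hsum : ∑ j, a j = 1)
    (K : Fin m → ℕ) (hK1 : ∀ j, 1 ≤ K j) (hKP : ∀ i j, K i + K j ≤ P)
    (hmono : ∀ i j : Fin m, i ≤ j → K i ≤ K j) :
    (∑ ω : Fin n → Fin m × Finset (Fin P),
        if (∀ j : Fin n, j ≠ ⟨0, hn⟩ → Disjoint (ω ⟨0, hn⟩).2 (ω j).2)
        then cfgWeight n m P a K ω else 0) =
      (∑ i : Fin m, a i *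
        (1 - ∑ j, a j * (1 - ((P - K i).choose (K j) : ℝ) / ((P.choose (K j)) : ℝ))) ^ (n - 1)) ∧
    (∑ ω : Fin n → Fin m × Finset (Fin P),
        if (∀ j : Fin n, j ≠ ⟨0, hn⟩ → Disjoint (ω ⟨0, hn⟩).2 (ω j).2)
        then cfgWeight n m P a K ω else 0) ≤
      (1 - ∑ j, a j *
        (1 - ((P - K ⟨0, hm⟩).choose (K j) : ℝ) / ((P.choose (K j)) : ℝ))) ^ (n - 1) := by
  classical
  set v₀ : Fin n := ⟨0, hn⟩ with hv₀
  set w : Fin m × Finset (Fin P) → ℝ := fun x =>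
    a x.1 * if x.2.card = K x.1 then (1:ℝ)/(P.choose (K x.1) : ℝ) else 0 with hw
  -- rewriting 1 - b_i
  have hG : ∀ i : Fin m,
      (1 - ∑ j, a j * (1 - ((P - K i).choose (K j) : ℝ) / ((P.choose (K j)) : ℝ)))
        = ∑ j, a j * (((P - K i).choose (K j) : ℝ) / ((P.choose (K j)) : ℝ)) := by
    intro i
    simp only [mul_sub, mul_one, Finset.sum_sub_distrib, hsum]
    ring
  have hGnonneg : ∀ i : Fin m,
      0 ≤ ∑ j, a j * (((P - K i).choose (K j) : ℝ) / ((P.choose (K j)) : ℝ)) := by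
    intro i
    refine Finset.sum_nonneg fun j _ => mul_nonneg (ha j).le (div_nonneg ?_ ?_) <;> positivity
  -- the main computation
  have key : (∑ ω : Fin n → Fin m × Finset (Fin P),
        if (∀ j : Fin n, j ≠ v₀ → Disjoint (ω v₀).2 (ω j).2)
        then cfgWeight n m P a K ω else 0) =
      (∑ i : Fin m, a i *
        (1 - ∑ j, a j * (1 - ((P - K i).choose (K j) : ℝ) / ((P.choose (K j)) : ℝ))) ^ (n - 1)) := by
    have step1 : ∀ ω : Fin n → Fin m × Finset (Fin P),
        (if (∀ j : Fin n, j ≠ v₀ → Disjoint (ω v₀).2 (ω j).2)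
          then cfgWeight n m P a K ω else 0)
        = w (ω v₀) * ∏ j : {j : Fin n // j ≠ v₀},
            (if Disjoint (ω v₀).2 ((ω j).2) then w (ω j) else 0) := by
      intro ω
      by_cases h : ∀ j : Fin n, j ≠ v₀ → Disjoint (ω v₀).2 (ω j).2
      · rw [if_pos h]
        have h2 : ∀ j : {j : Fin n // j ≠ v₀},
            (if Disjoint (ω v₀).2 ((ω j).2) then w (ω j) else 0) = w (ω j) :=
          fun j => if_pos (h j j.2)
        rw [Finset.prod_congr rfl fun j _ => h2 j]
        unfold cfgWeight
        rw [← Finset.mul_prod_erase Finset.univ (fun v => w (ω v)) (Finset.mem_univ v₀),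
          Finset.prod_subtype (p := fun j : Fin n => j ≠ v₀) (Finset.univ.erase v₀)
            (fun x => by simp [Finset.mem_erase]) (fun v => w (ω v))]
      · rw [if_neg h]
        push_neg at h
        obtain ⟨j, hj, hdis⟩ := h
        symm
        rw [mul_eq_zero]
        right
        exact Finset.prod_eq_zero (Finset.mem_univ ⟨j, hj⟩) (by simp [hdis])
    rw [Finset.sum_congr rfl fun ω _ => step1 ω]
    have hcard : Fintype.card {j : Fin n // j ≠ v₀} = n - 1 := by
      simp [Fintype.card_subtype_compl]
    calc
      ∑ ω : Fin n → Fin m × Finset (Fin P), w (ω v₀) * ∏ j : {j : Fin n // j ≠ v₀},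
            (if Disjoint (ω v₀).2 ((ω j).2) then w (ω j) else 0)
        = ∑ p : (Fin m × Finset (Fin P)) × ({j : Fin n // j ≠ v₀} → Fin m × Finset (Fin P)),
            w p.1 * ∏ j : {j : Fin n // j ≠ v₀},
              (if Disjoint p.1.2 ((p.2 j).2) then w (p.2 j) else 0) := by
          rw [← Equiv.sum_comp (Equiv.funSplitAt v₀ (Fin m × Finset (Fin P))).symm]
          refine Finset.sum_congr rfl fun p _ => ?_
          have hA : (Equiv.funSplitAt v₀ (Fin m × Finset (Fin P))).symm p v₀ = p.1 := by
            simp [Equiv.funSplitAt, Equiv.piSplitAt]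
          have hB : ∀ j : {j : Fin n // j ≠ v₀},
              (Equiv.funSplitAt v₀ (Fin m × Finset (Fin P))).symm p j = p.2 j := by
            intro j
            simp [Equiv.funSplitAt, Equiv.piSplitAt, j.2]
          rw [hA]
          congr 1
          exact Finset.prod_congr rfl fun j _ => by rw [hB]
      _ = ∑ x : Fin m × Finset (Fin P),
            w x * (∑ y : Fin m × Finset (Fin P),
              if Disjoint x.2 y.2 then w y else 0) ^ (n - 1) := by
          rw [Fintype.sum_prod_type]
          refine Finset.sum_congr rfl fun x _ => ?_
          dsimp only
          rw [← Finset.mul_sum]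
          congr 1
          rw [← Fintype.prod_sum (fun (_ : {j : Fin n // j ≠ v₀}) (y : Fin m × Finset (Fin P)) =>
            if Disjoint x.2 y.2 then w y else 0), Finset.prod_const, Finset.card_univ, hcard]
      _ = ∑ x : Fin m × Finset (Fin P),
            w x * (∑ k, a k * (((P - x.2.card).choose (K k) : ℝ) / (P.choose (K k) : ℝ))) ^ (n - 1) := by
          refine Finset.sum_congr rfl fun x _ => ?_
          rw [ris_inner_sum a K x.2]
      _ = ∑ i : Fin m, a i *
            (1 - ∑ j, a j * (1 - ((P - K i).choose (K j) : ℝ) / ((P.choose (K j)) : ℝ))) ^ (n - 1) := by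
          rw [Fintype.sum_prod_type]
          refine Finset.sum_congr rfl fun i _ => ?_
          have hterm : ∀ S : Finset (Fin P),
              w (i, S) * (∑ k, a k * (((P - S.card).choose (K k) : ℝ) / (P.choose (K k) : ℝ))) ^ (n - 1)
              = if S.card = K i then
                  a i * ((1:ℝ)/(P.choose (K i) : ℝ)) *
                    (∑ k, a k * (((P - K i).choose (K k) : ℝ) / (P.choose (K k) : ℝ))) ^ (n - 1)
                else 0 := by
            intro S
            by_cases h : S.card = K i
            · simp [hw, h]
            · simp [hw, h]
          rw [Finset.sum_congr rfl fun S _ => hterm S, ← Finset.sum_filter, Finset.sum_const]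
          have hfil : (Finset.univ.filter fun S : Finset (Fin P) => S.card = K i)
              = Finset.powersetCard (K i) (Finset.univ : Finset (Fin P)) := by
            ext S; simp [Finset.mem_powersetCard]
          rw [hfil, Finset.card_powersetCard, Finset.card_univ, Fintype.card_fin, hG i]
          have hKle : K i ≤ P := le_trans (Nat.le_add_left _ _) (hKP i i)
          have hC : (P.choose (K i) : ℝ) ≠ 0 := by
            exact_mod_cast (Nat.choose_pos hKle).ne'
          rw [nsmul_eq_mul]
          field_simp
  refine ⟨key, ?_⟩
  rw [key]
  set i₀ : Fin m := ⟨0, hm⟩ with hi₀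
  have hle : ∀ i : Fin m,
      (1 - ∑ j, a j * (1 - ((P - K i).choose (K j) : ℝ) / ((P.choose (K j)) : ℝ)))
      ≤ (1 - ∑ j, a j * (1 - ((P - K i₀).choose (K j) : ℝ) / ((P.choose (K j)) : ℝ))) := by
    intro i
    rw [hG, hG]
    refine Finset.sum_le_sum fun j _ => ?_
    have h1 : (P - K i).choose (K j) ≤ (P - K i₀).choose (K j) :=
      Nat.choose_le_choose _ (Nat.sub_le_sub_left (hmono i₀ i (Fin.mk_le_of_le_val (Nat.zero_le _))) P)
    have h2 : ((P - K i).choose (K j) : ℝ) ≤ ((P - K i₀).choose (K j) : ℝ) := by exact_mod_cast h1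
    gcongr
    exact (ha j).le
  calc
    ∑ i : Fin m, a i *
        (1 - ∑ j, a j * (1 - ((P - K i).choose (K j) : ℝ) / ((P.choose (K j)) : ℝ))) ^ (n - 1)
      ≤ ∑ i : Fin m, a i *
        (1 - ∑ j, a j * (1 - ((P - K i₀).choose (K j) : ℝ) / ((P.choose (K j)) : ℝ))) ^ (n - 1) := by
        refine Finset.sum_le_sum fun i _ => ?_
        have hbase : 0 ≤ (1 - ∑ j, a j * (1 - ((P - K i).choose (K j) : ℝ) / ((P.choose (K j)) : ℝ))) := by
          rw [hG]; exact hGnonneg i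
        exact mul_le_mul_of_nonneg_left (pow_le_pow_left₀ hbase (hle i) _) (ha i).le
    _ = (1 - ∑ j, a j * (1 - ((P - K i₀).choose (K j) : ℝ) / ((P.choose (K j)) : ℝ))) ^ (n - 1) := by
        rw [← Finset.sum_mul, hsum, one_mul]
end

section
/- In the general random intersection graph G(n, a⃗, K⃗, P), the probability that two fixed distinct vertices v₁, v₂ both belong to group A₁ and are both isolated is at most a₁² · (Σ_{ℓ=1}^m a_ℓ · C(P−2K₁, K_ℓ)/C(P, K_ℓ))^{n−2}. -/
open Finset

attribute [local instance] Classical.propDecidable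

lemma count_aux {P c : ℕ} (U : Finset (Fin P)) :
    (∑ S : Finset (Fin P), if S.card = c ∧ Disjoint U S then (1:ℝ) else 0)
      = ((P - U.card).choose c : ℝ) := by
  classical
  rw [Finset.sum_boole]
  have h : Finset.filter (fun S : Finset (Fin P) => S.card = c ∧ Disjoint U S) Finset.univ
      = Finset.powersetCard c Uᶜ := by
    ext S
    simp only [Finset.mem_filter, Finset.mem_univ, true_and, Finset.mem_powersetCard]
    constructor
    · rintro ⟨h1, h2⟩; exact ⟨le_compl_iff_disjoint_left.mpr h2, h1⟩
    · rintro ⟨h1, h2⟩; exact ⟨h2, le_compl_iff_disjoint_left.mp h1⟩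
  rw [h, Finset.card_powersetCard, Finset.card_compl, Fintype.card_fin]

lemma sum_succ_fun {β : Type*} [Fintype β] {k : ℕ} (F : (Fin (k+1) → β) → ℝ) :
    ∑ ω : Fin (k+1) → β, F ω = ∑ x : β, ∑ τ : Fin k → β, F (Fin.cons x τ) := by
  rw [← Equiv.sum_comp (Fin.consEquiv fun _ => β) F, Fintype.sum_prod_type]
  rfl

lemma sum_pow_fun {β : Type*} [Fintype β] (f : β → ℝ) (k : ℕ) :
    (∑ z : β, f z) ^ k = ∑ τ : Fin k → β, ∏ i : Fin k, f (τ i) := by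
  classical
  calc (∑ z : β, f z) ^ k = ∏ _i : Fin k, ∑ z : β, f z := by
        rw [Finset.prod_const, Finset.card_univ, Fintype.card_fin]
    _ = ∑ τ ∈ Fintype.piFinset (fun _ : Fin k => Finset.univ), ∏ i, f (τ i) :=
        Finset.prod_univ_sum _ _
    _ = ∑ τ : Fin k → β, ∏ i, f (τ i) := by rw [Fintype.piFinset_univ]

/-- The probability that two fixed distinct vertices `v₁, v₂` both belong to group `A₁`
and are both isolated in `G(n, a⃗, K⃗, P)` is at most
`a₁² · (∑_ℓ a_ℓ C(P-2K₁, K_ℓ)/C(P, K_ℓ))^{n-2}`. -/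
theorem stmt_13 (n m P : ℕ) (hn : 1 < n) (hm : 0 < m) (a : Fin m → ℝ)
    (ha : ∀ j, 0 < a j) (hsum : ∑ j, a j = 1)
    (K : Fin m → ℕ) (hK1 : ∀ j, 1 ≤ K j)
    (hKP : ∀ ℓ, 2 * K ⟨0, hm⟩ + K ℓ ≤ P) :
    (∑ ω : Fin n → Fin m × Finset (Fin P),
        if (ω ⟨0, lt_trans Nat.one_pos hn⟩).1 = ⟨0, hm⟩ ∧ (ω ⟨1, hn⟩).1 = ⟨0, hm⟩ ∧
            (∀ j : Fin n, j ≠ ⟨0, lt_trans Nat.one_pos hn⟩ →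
              Disjoint (ω ⟨0, lt_trans Nat.one_pos hn⟩).2 (ω j).2) ∧
            (∀ j : Fin n, j ≠ ⟨1, hn⟩ → Disjoint (ω ⟨1, hn⟩).2 (ω j).2)
        then cfgWeight n m P a K ω else 0) ≤
    (a ⟨0, hm⟩)^2 *
      (∑ ℓ : Fin m, a ℓ *
        ((P - 2 * K ⟨0, hm⟩).choose (K ℓ) : ℝ) / ((P.choose (K ℓ)) : ℝ)) ^ (n - 2) := by
  obtain ⟨k, rfl⟩ : ∃ k, n = k + 2 := ⟨n - 2, by omega⟩
  have e0 : (⟨0, lt_trans Nat.one_pos hn⟩ : Fin (k+2)) = 0 := by ext; simp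
  have e1 : (⟨1, hn⟩ : Fin (k+2)) = 1 := by ext; simp
  simp only [e0, e1]
  simp only [sum_succ_fun]
  set q : Fin m := ⟨0, hm⟩ with hq
  set g : Fin m × Finset (Fin P) → ℝ := fun z =>
    a z.1 * if z.2.card = K z.1 then (1:ℝ) / (P.choose (K z.1) : ℝ) else 0 with hg
  have hw : ∀ ω : Fin (k+2) → Fin m × Finset (Fin P),
      cfgWeight (k+2) m P a K ω = ∏ v, g (ω v) := fun _ => rfl
  have hgnn : ∀ z, 0 ≤ g z := by
    intro z
    refine mul_nonneg (ha z.1).le ?_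
    split
    · positivity
    · exact le_rfl
  have hKle : ∀ ℓ, K ℓ ≤ P := fun ℓ => by have := hKP ℓ; omega
  have hC0 : (0:ℝ) < (P.choose (K q) : ℝ) := by exact_mod_cast Nat.choose_pos (hKle q)
  set R : ℝ := ∑ ℓ : Fin m, a ℓ * ((P - 2 * K q).choose (K ℓ) : ℝ) / (P.choose (K ℓ) : ℝ)
    with hR
  have hRnn : 0 ≤ R := by
    rw [hR]
    refine Finset.sum_nonneg fun ℓ _ => ?_
    have := (ha ℓ).le
    positivity
  have hsingle : (∑ S : Finset (Fin P), if S.card = K q then (1:ℝ) else 0)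
      = (P.choose (K q) : ℝ) := by
    have h := count_aux (P := P) (c := K q) (∅ : Finset (Fin P))
    simpa using h
  have key : ∀ x y : Fin m × Finset (Fin P), x.2.card = K q → y.2.card = K q →
      Disjoint x.2 y.2 →
      (∑ z : Fin m × Finset (Fin P),
        if Disjoint x.2 z.2 ∧ Disjoint y.2 z.2 then g z else 0) = R := by
    intro x y hx hy hxy
    rw [hR, Fintype.sum_prod_type]
    refine Finset.sum_congr rfl fun ℓ _ => ?_
    have hcardU : (x.2 ∪ y.2).card = 2 * K q := by
      rw [Finset.card_union_of_disjoint hxy, hx, hy]; ring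
    have step : ∀ S : Finset (Fin P),
        (if Disjoint x.2 S ∧ Disjoint y.2 S then g (ℓ, S) else 0)
          = (a ℓ * ((1:ℝ) / (P.choose (K ℓ) : ℝ))) *
              (if S.card = K ℓ ∧ Disjoint (x.2 ∪ y.2) S then (1:ℝ) else 0) := by
      intro S
      rw [hg]
      by_cases h1 : Disjoint x.2 S ∧ Disjoint y.2 S
      · have h1' : Disjoint (x.2 ∪ y.2) S := Finset.disjoint_union_left.mpr h1
        by_cases h2 : S.card = K ℓ
        · simp [h1, h1', h2]
        · simp [h1, h2]
      · have h1' : ¬ (S.card = K ℓ ∧ Disjoint (x.2 ∪ y.2) S) := by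
          rw [Finset.disjoint_union_left]; tauto
        simp [h1, h1']
    simp only [step]
    rw [← Finset.mul_sum, count_aux, hcardU]
    ring
  set G : Fin m × Finset (Fin P) → ℝ := fun z =>
    if z.1 = q ∧ z.2.card = K q then a q * ((1:ℝ) / (P.choose (K q) : ℝ)) else 0 with hG
  have hGnn : ∀ z, 0 ≤ G z := by
    intro z
    rw [hG]
    dsimp only
    split
    · have := (ha q).le
      positivity
    · exact le_rfl
  have hGsum : (∑ z : Fin m × Finset (Fin P), G z) = a q := by
    rw [hG, Fintype.sum_prod_type]
    have hinner : ∀ ℓ : Fin m,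
        (∑ S : Finset (Fin P),
          if ℓ = q ∧ S.card = K q then a q * ((1:ℝ) / (P.choose (K q) : ℝ)) else 0)
        = if ℓ = q then a q else 0 := by
      intro ℓ
      by_cases h1 : ℓ = q
      · simp only [h1, true_and, if_true]
        have hsp : ∀ S : Finset (Fin P),
            (if S.card = K q then a q * ((1:ℝ) / (P.choose (K q) : ℝ)) else 0)
            = (a q * ((1:ℝ) / (P.choose (K q) : ℝ))) * (if S.card = K q then (1:ℝ) else 0) := by
          intro S; split <;> simp
        simp only [hsp]
        rw [← Finset.mul_sum, hsingle, mul_assoc, one_div_mul_cancel hC0.ne', mul_one]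
      · simp [h1]
    simp only [hinner]
    rw [Finset.sum_ite_eq' Finset.univ q (fun _ => a q)]
    simp
  have per : ∀ x y : Fin m × Finset (Fin P),
      (∑ τ : Fin k → Fin m × Finset (Fin P),
        if ((Fin.cons x (Fin.cons y τ) : Fin (k+2) → Fin m × Finset (Fin P)) 0).1 = q ∧
            ((Fin.cons x (Fin.cons y τ) : Fin (k+2) → Fin m × Finset (Fin P)) 1).1 = q ∧
            (∀ j : Fin (k+2), j ≠ 0 →
              Disjoint ((Fin.cons x (Fin.cons y τ) : Fin (k+2) → Fin m × Finset (Fin P)) 0).2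
                ((Fin.cons x (Fin.cons y τ) : Fin (k+2) → Fin m × Finset (Fin P)) j).2) ∧
            (∀ j : Fin (k+2), j ≠ 1 →
              Disjoint ((Fin.cons x (Fin.cons y τ) : Fin (k+2) → Fin m × Finset (Fin P)) 1).2
                ((Fin.cons x (Fin.cons y τ) : Fin (k+2) → Fin m × Finset (Fin P)) j).2)
        then cfgWeight (k+2) m P a K (Fin.cons x (Fin.cons y τ)) else 0)
      ≤ G x * G y * R ^ k := by
    intro x y
    have hc0 : ∀ τ : Fin k → Fin m × Finset (Fin P),
        (Fin.cons x (Fin.cons y τ) : Fin (k+2) → Fin m × Finset (Fin P)) 0 = x :=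
      fun τ => Fin.cons_zero _ _
    have hc1 : ∀ τ : Fin k → Fin m × Finset (Fin P),
        (Fin.cons x (Fin.cons y τ) : Fin (k+2) → Fin m × Finset (Fin P)) 1 = y := by
      intro τ; rw [← Fin.succ_zero_eq_one, Fin.cons_succ, Fin.cons_zero]
    have hcs : ∀ (τ : Fin k → Fin m × Finset (Fin P)) (i : Fin k),
        (Fin.cons x (Fin.cons y τ) : Fin (k+2) → Fin m × Finset (Fin P)) i.succ.succ = τ i := by
      intro τ i; rw [Fin.cons_succ, Fin.cons_succ]
    have hss1 : ∀ i : Fin k, (Fin.succ (Fin.succ i) : Fin (k+2)) ≠ 1 := by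
      intro i h
      rw [← Fin.succ_zero_eq_one] at h
      exact Fin.succ_ne_zero _ (Fin.succ_injective _ h)
    have h10 : (1 : Fin (k+2)) ≠ 0 := by
      rw [← Fin.succ_zero_eq_one]; exact Fin.succ_ne_zero _
    have hwc : ∀ τ : Fin k → Fin m × Finset (Fin P),
        cfgWeight (k+2) m P a K (Fin.cons x (Fin.cons y τ))
          = g x * g y * ∏ i : Fin k, g (τ i) := by
      intro τ
      rw [hw, Fin.prod_univ_succ, Fin.prod_univ_succ]
      simp only [Fin.cons_zero, Fin.cons_succ]
      ring
    by_cases hcase : x.1 = q ∧ x.2.card = K q ∧ y.1 = q ∧ y.2.card = K q ∧ Disjoint x.2 y.2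
    · obtain ⟨hx1, hx2, hy1, hy2, hxy⟩ := hcase
      have hgx : g x = a q * ((1:ℝ) / (P.choose (K q) : ℝ)) := by
        rw [hg]; dsimp only; rw [hx1, hx2, if_pos rfl]
      have hgy : g y = a q * ((1:ℝ) / (P.choose (K q) : ℝ)) := by
        rw [hg]; dsimp only; rw [hy1, hy2, if_pos rfl]
      have hpt : ∀ τ : Fin k → Fin m × Finset (Fin P),
          (if ((Fin.cons x (Fin.cons y τ) : Fin (k+2) → Fin m × Finset (Fin P)) 0).1 = q ∧
              ((Fin.cons x (Fin.cons y τ) : Fin (k+2) → Fin m × Finset (Fin P)) 1).1 = q ∧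
              (∀ j : Fin (k+2), j ≠ 0 →
                Disjoint ((Fin.cons x (Fin.cons y τ) : Fin (k+2) → Fin m × Finset (Fin P)) 0).2
                  ((Fin.cons x (Fin.cons y τ) : Fin (k+2) → Fin m × Finset (Fin P)) j).2) ∧
              (∀ j : Fin (k+2), j ≠ 1 →
                Disjoint ((Fin.cons x (Fin.cons y τ) : Fin (k+2) → Fin m × Finset (Fin P)) 1).2
                  ((Fin.cons x (Fin.cons y τ) : Fin (k+2) → Fin m × Finset (Fin P)) j).2)
            then cfgWeight (k+2) m P a K (Fin.cons x (Fin.cons y τ)) else 0)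
          = g x * g y *
              ∏ i : Fin k,
                (if Disjoint x.2 (τ i).2 ∧ Disjoint y.2 (τ i).2 then g (τ i) else 0) := by
        intro τ
        by_cases hall : ∀ i : Fin k, Disjoint x.2 (τ i).2 ∧ Disjoint y.2 (τ i).2
        · rw [if_pos, hwc]
          · congr 1
            exact Finset.prod_congr rfl fun i _ => (if_pos (hall i)).symm
          · refine ⟨by rw [hc0]; exact hx1, by rw [hc1]; exact hy1, ?_, ?_⟩
            · intro j hj
              rcases Fin.eq_zero_or_eq_succ j with rfl | ⟨i, rfl⟩
              · exact absurd rfl hj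
              · rw [hc0, Fin.cons_succ]
                rcases Fin.eq_zero_or_eq_succ i with rfl | ⟨i', rfl⟩
                · rw [Fin.cons_zero]; exact hxy
                · rw [Fin.cons_succ]; exact (hall i').1
            · intro j hj
              rcases Fin.eq_zero_or_eq_succ j with rfl | ⟨i, rfl⟩
              · rw [hc1, hc0]; exact hxy.symm
              · rw [hc1, Fin.cons_succ]
                rcases Fin.eq_zero_or_eq_succ i with rfl | ⟨i', rfl⟩
                · exact absurd Fin.succ_zero_eq_one hj
                · rw [Fin.cons_succ]; exact (hall i').2
        · rw [not_forall] at hall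
          obtain ⟨i0, hi0⟩ := hall
          rw [if_neg]
          · have hz : (if Disjoint x.2 (τ i0).2 ∧ Disjoint y.2 (τ i0).2 then g (τ i0) else 0)
                = 0 := if_neg hi0
            rw [Finset.prod_eq_zero (Finset.mem_univ i0) hz, mul_zero]
          · rintro ⟨-, -, hC, hD⟩
            have d1 := hC i0.succ.succ (Fin.succ_ne_zero _)
            rw [hc0, hcs] at d1
            have d2 := hD i0.succ.succ (hss1 i0)
            rw [hc1, hcs] at d2
            exact hi0 ⟨d1, d2⟩
      refine le_of_eq ?_
      rw [Finset.sum_congr rfl fun τ _ => hpt τ, ← Finset.mul_sum]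
      have hps := sum_pow_fun
        (fun z : Fin m × Finset (Fin P) =>
          if Disjoint x.2 z.2 ∧ Disjoint y.2 z.2 then g z else 0) k
      rw [← hps, key x y hx2 hy2 hxy, hgx, hgy, hG]
      dsimp only
      rw [if_pos ⟨hx1, hx2⟩, if_pos ⟨hy1, hy2⟩]
    · refine le_trans (le_of_eq (Finset.sum_eq_zero fun τ _ => ?_)) ?_
      · split_ifs with hcond
        · obtain ⟨h1, h2, hC, hD⟩ := hcond
          rw [hc0] at h1
          rw [hc1] at h2
          have hdj := hC 1 h10
          rw [hc0, hc1] at hdj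
          have hnot : ¬ (x.2.card = K q ∧ y.2.card = K q) :=
            fun h => hcase ⟨h1, h.1, h2, h.2, hdj⟩
          rw [hwc]
          rcases not_and_or.mp hnot with h | h
          · have hzx : g x = 0 := by
              rw [hg]; dsimp only; rw [h1, if_neg h, mul_zero]
            rw [hzx, zero_mul, zero_mul]
          · have hzy : g y = 0 := by
              rw [hg]; dsimp only; rw [h2, if_neg h, mul_zero]
            rw [hzy, mul_zero, zero_mul]
        · rfl
      · exact mul_nonneg (mul_nonneg (hGnn x) (hGnn y)) (pow_nonneg hRnn k)
  refine le_trans (Finset.sum_le_sum fun x _ => Finset.sum_le_sum fun y _ => per x y) ?_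
  have hfin : (∑ x : Fin m × Finset (Fin P), ∑ y : Fin m × Finset (Fin P), G x * G y * R ^ k)
      = a q ^ 2 * R ^ k := by
    calc (∑ x : Fin m × Finset (Fin P), ∑ y : Fin m × Finset (Fin P), G x * G y * R ^ k)
        = ∑ x : Fin m × Finset (Fin P), G x * (a q * R ^ k) := by
          refine Finset.sum_congr rfl fun x _ => ?_
          rw [← Finset.sum_mul, ← Finset.mul_sum, hGsum]
          ring
      _ = a q * (a q * R ^ k) := by rw [← Finset.sum_mul, hGsum]
      _ = a q ^ 2 * R ^ k := by ring
  have hk2 : k + 2 - 2 = k := by omega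
  rw [hfin, hk2]
end

section
/- For integers K, L, P with 2K + L ≤ P: C(P−2K, L)/C(P, L) ≤ (C(P−K, L)/C(P, L))², i.e., C(P−2K, L) · C(P, L) ≤ C(P−K, L)². -/
lemma desc_logconcave (L K P : ℕ) :
    (P - 2 * K).descFactorial L * P.descFactorial L ≤ ((P - K).descFactorial L) ^ 2 := by
  induction L generalizing P with
  | zero => simp
  | succ n ih =>
    simp only [Nat.descFactorial_succ]
    have key : (P - 2 * K - n) * (P - n) ≤ (P - K - n) ^ 2 := by
      set a := P - K - n with ha
      have h1 : P - 2 * K - n = a - K := by omega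
      have h2 : P - n ≤ a + K := by omega
      calc (P - 2 * K - n) * (P - n) ≤ (a - K) * (a + K) := by
            rw [h1]; exact Nat.mul_le_mul_left _ h2
        _ ≤ a ^ 2 := by
            rcases Nat.le_total K a with hk | hk
            · have : a = (a - K) + K := by omega
              nlinarith [this]
            · simp [Nat.sub_eq_zero_of_le hk]
    calc (P - 2 * K - n) * (P - 2 * K).descFactorial n * ((P - n) * P.descFactorial n)
        = ((P - 2 * K - n) * (P - n)) * ((P - 2 * K).descFactorial n * P.descFactorial n) := by
          ring
      _ ≤ (P - K - n) ^ 2 * ((P - K).descFactorial n ^ 2) :=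
          Nat.mul_le_mul key (ih P)
      _ = ((P - K - n) * (P - K).descFactorial n) ^ 2 := by ring

lemma choose_logconcave (L K P : ℕ) :
    (P - 2 * K).choose L * P.choose L ≤ ((P - K).choose L) ^ 2 := by
  have hd := desc_logconcave L K P
  rw [Nat.descFactorial_eq_factorial_mul_choose, Nat.descFactorial_eq_factorial_mul_choose,
    Nat.descFactorial_eq_factorial_mul_choose] at hd
  have hf : 0 < Nat.factorial L * Nat.factorial L := Nat.mul_pos L.factorial_pos L.factorial_pos
  refine Nat.le_of_mul_le_mul_left ?_ hf
  calc Nat.factorial L * Nat.factorial L * ((P - 2 * K).choose L * P.choose L)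
      = Nat.factorial L * (P - 2 * K).choose L * (Nat.factorial L * P.choose L) := by ring
    _ ≤ (Nat.factorial L * (P - K).choose L) ^ 2 := hd
    _ = Nat.factorial L * Nat.factorial L * ((P - K).choose L ^ 2) := by ring

/-- For `2K + L ≤ P`: `C(P-2K, L)/C(P, L) ≤ (C(P-K, L)/C(P, L))²`, i.e.
`C(P-2K, L)·C(P, L) ≤ C(P-K, L)²`. -/
theorem stmt_14 (K L P : ℕ) (h : 2 * K + L ≤ P) :
    (((P - 2 * K).choose L : ℝ)) / ((P.choose L : ℝ)) ≤
      ((((P - K).choose L : ℝ)) / ((P.choose L : ℝ)))^2 ∧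
    (P - 2 * K).choose L * P.choose L ≤ ((P - K).choose L)^2 := by
  have hnat := choose_logconcave L K P
  refine ⟨?_, hnat⟩
  have hc : (0 : ℝ) < (P.choose L : ℝ) := by
    exact_mod_cast Nat.choose_pos (by omega)
  have hcast : ((P - 2 * K).choose L : ℝ) * (P.choose L : ℝ) ≤ ((P - K).choose L : ℝ) ^ 2 := by
    exact_mod_cast hnat
  rw [div_pow, div_le_div_iff₀ hc (by positivity)]
  nlinarith [hc]
end
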